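/- Let Y be a spherically distributed random vector in ℝ^k, i.e., Q Y has the same distribution as Y for every orthogonal matrix Q ∈ ℝ^{k×k}. Let A ∈ ℝ^{k×d} be any matrix and μ ∈ ℝ^d, and set X := μ + Aᵀ Y. Then there exist an orthogonal matrix Ω ∈ ℝ^{d×d} and a sign-flip invariant random vector Z in ℝ^d such that X has the same distribution as μ + Ω Z; that is, every elliptically distributed random vector in ℝ^d satisfies Marden's model. (Finite-dimensional content of the inclusion FE ⊂ FCS in Proposition 2.) -/

import Mathlib

open MeasureTheory ProbabilityTheory Matrix

/-- A random vector `Z` in `ℝ^n` is sign-flip invariant (coordinatewise symmetric) if for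
every vector of signs `ε ∈ {−1, 1}^n`, `(ε 1 Z 1, …, ε n Z n)` has the same distribution
as `Z`. -/
def SignFlipInvariant {Ω : Type*} [MeasurableSpace Ω] (P : Measure Ω) {n : ℕ}
    (Z : Ω → Fin n → ℝ) : Prop :=
  ∀ ε : Fin n → ℝ, (∀ i, ε i = 1 ∨ ε i = -1) →
    IdentDistrib (fun ω i => ε i * Z ω i) Z P P

lemma vecMulVec_mul_vecMulVec {m n q : Type*} [Fintype n]
    (u : m → ℝ) (v : n → ℝ) (w : n → ℝ) (x : q → ℝ) :
    (vecMulVec u v : Matrix m n ℝ) * (vecMulVec w x : Matrix n q ℝ)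
      = (v ⬝ᵥ w) • vecMulVec u x := by
  ext a b
  simp only [mul_apply, vecMulVec_apply, Matrix.smul_apply, dotProduct, smul_eq_mul,
    Finset.sum_mul]
  apply Finset.sum_congr rfl
  intro l _
  ring

lemma sign_flip_factor {d k : ℕ} (C : Matrix (Fin d) (Fin k) ℝ)
    (hC : ∀ i j, i ≠ j → (C * Cᵀ) i j = 0)
    (ε : Fin d → ℝ) (hε : ∀ i, ε i = 1 ∨ ε i = -1) :
    ∃ Q : Matrix (Fin k) (Fin k) ℝ, Qᵀ * Q = 1 ∧ (Matrix.diagonal ε) * C = C * Q := by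
  classical
  set s : Finset (Fin d) := Finset.univ.filter (fun i => ε i = -1 ∧ C i ≠ 0) with hs
  have hrow : ∀ i j : Fin d, (C * Cᵀ) i j = C i ⬝ᵥ C j := by
    intro i j; simp [mul_apply, dotProduct, transpose_apply]
  have hne : ∀ i ∈ s, C i ⬝ᵥ C i ≠ 0 := by
    intro i hi
    have : C i ≠ 0 := (Finset.mem_filter.mp hi).2.2
    simpa [dotProduct_self_eq_zero] using this
  set Q : Matrix (Fin k) (Fin k) ℝ :=
    1 - ∑ i ∈ s, (2 / (C i ⬝ᵥ C i)) • vecMulVec (C i) (C i) with hQ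
  have hQsymm : Qᵀ = Q := by
    have h1 : ∀ u : Fin k → ℝ, (vecMulVec u u : Matrix (Fin k) (Fin k) ℝ)ᵀ = vecMulVec u u := by
      intro u; ext a b; simp [vecMulVec_apply, transpose_apply, mul_comm]
    simp [hQ, transpose_sub, transpose_sum, transpose_smul, h1]
  have hmul : ∀ i ∈ s, ∀ j ∈ s,
      ((2 / (C i ⬝ᵥ C i)) • vecMulVec (C i) (C i)) * ((2 / (C j ⬝ᵥ C j)) • vecMulVec (C j) (C j))
        = if i = j then (4 / (C i ⬝ᵥ C i)) • vecMulVec (C i) (C i) else 0 := by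
    intro i hi j hj
    rw [Matrix.smul_mul, Matrix.mul_smul, _root_.vecMulVec_mul_vecMulVec]
    have ha := hne i hi
    by_cases hij : i = j
    · subst hij
      simp only [if_pos rfl, smul_smul]
      congr 1
      field_simp
      ring
    · have h0 : C i ⬝ᵥ C j = 0 := by rw [← hrow]; exact hC i j hij
      rw [if_neg hij, h0]
      simp
  have hQQ : Q * Q = 1 := by
    have hTT : (∑ i ∈ s, (2 / (C i ⬝ᵥ C i)) • vecMulVec (C i) (C i)) *
        (∑ i ∈ s, (2 / (C i ⬝ᵥ C i)) • vecMulVec (C i) (C i))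
        = ∑ i ∈ s, (4 / (C i ⬝ᵥ C i)) • vecMulVec (C i) (C i) := by
      rw [Finset.sum_mul]
      apply Finset.sum_congr rfl
      intro i hi
      rw [Finset.mul_sum, Finset.sum_congr rfl (fun j hj => hmul i hi j hj)]
      simp [Finset.sum_ite_eq, hi]
    have hdouble : (∑ i ∈ s, (4 / (C i ⬝ᵥ C i)) • vecMulVec (C i) (C i))
        = (∑ i ∈ s, (2 / (C i ⬝ᵥ C i)) • vecMulVec (C i) (C i))
          + (∑ i ∈ s, (2 / (C i ⬝ᵥ C i)) • vecMulVec (C i) (C i)) := by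
      rw [← Finset.sum_add_distrib]
      apply Finset.sum_congr rfl
      intro i hi
      rw [← add_smul]
      congr 1
      ring
    rw [hQ, sub_mul, mul_sub, mul_sub, one_mul, mul_one, hTT, hdouble]
    simp only [one_mul]
    abel
  have hmvv : ∀ (u v : Fin k → ℝ) (a : Fin d) (b : Fin k),
      (C * vecMulVec u v) a b = (C a ⬝ᵥ u) * v b := by
    intro u v a b
    simp only [mul_apply, vecMulVec_apply, dotProduct, Finset.sum_mul]
    apply Finset.sum_congr rfl
    intro l _
    ring
  have hterm : ∀ (a : Fin d) (b : Fin k),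
      (∑ i ∈ s, (2 / (C i ⬝ᵥ C i)) * ((C a ⬝ᵥ C i) * C i b))
        = if a ∈ s then 2 * C a b else 0 := by
    intro a b
    by_cases ha : a ∈ s
    · rw [if_pos ha, Finset.sum_eq_single_of_mem a ha]
      · have haa := hne a ha
        field_simp
      · intro i hi hia
        have hz : C a ⬝ᵥ C i = 0 := by rw [← hrow]; exact hC a i (Ne.symm hia)
        simp [hz]
    · rw [if_neg ha]
      apply Finset.sum_eq_zero
      intro i hi
      have hia : a ≠ i := by rintro rfl; exact ha hi
      have hz : C a ⬝ᵥ C i = 0 := by rw [← hrow]; exact hC a i hia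
      simp [hz]
  refine ⟨Q, by rw [hQsymm, hQQ], ?_⟩
  ext a b
  have hCT : C * (∑ i ∈ s, (2 / (C i ⬝ᵥ C i)) • vecMulVec (C i) (C i))
      = ∑ i ∈ s, (2 / (C i ⬝ᵥ C i)) • (C * vecMulVec (C i) (C i)) := by
    rw [Matrix.mul_sum]
    exact Finset.sum_congr rfl fun i _ => Matrix.mul_smul _ _ _
  rw [hQ, Matrix.mul_sub, Matrix.mul_one, hCT]
  simp only [Matrix.sub_apply, Matrix.sum_apply, Matrix.smul_apply, smul_eq_mul, diagonal_mul, hmvv]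
  rw [hterm a b]
  by_cases ha : a ∈ s
  · rw [if_pos ha, (Finset.mem_filter.mp ha).2.1]
    ring
  · rw [if_neg ha]
    rcases hε a with h1 | h1
    · rw [h1]; ring
    · have hC0 : C a = 0 := by
        by_contra hC0
        exact ha (Finset.mem_filter.mpr ⟨Finset.mem_univ a, h1, hC0⟩)
      have hz : C a b = 0 := congrFun hC0 b
      rw [h1, hz]
      ring

/-- finite-dimensional content of FE ⊂ FCS in Proposition 2. If `Y` is
spherically distributed in `ℝ^k` and `X := μ + Aᵀ Y`, then there exist an orthogonal
matrix `O ∈ ℝ^{d×d}` and a sign-flip invariant random vector `Z` such that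
`X =_D μ + O Z`; that is, every elliptically distributed random vector satisfies
Marden's model. -/
theorem elliptical_satisfies_marden
    {Ω : Type*} [MeasurableSpace Ω] (P : Measure Ω) [IsProbabilityMeasure P]
    (k d : ℕ) (Y : Ω → Fin k → ℝ)
    (hspherical : ∀ Q : Matrix (Fin k) (Fin k) ℝ, Qᵀ * Q = 1 →
      IdentDistrib (fun ω => Q.mulVec (Y ω)) Y P P)
    (A : Matrix (Fin k) (Fin d) ℝ) (μ : Fin d → ℝ)
    (X : Ω → Fin d → ℝ) (hX : X = fun ω => μ + Aᵀ.mulVec (Y ω)) :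
    ∃ (O : Matrix (Fin d) (Fin d) ℝ) (Z : Ω → Fin d → ℝ),
      Oᵀ * O = 1 ∧ SignFlipInvariant P Z ∧
        IdentDistrib X (fun ω => μ + O.mulVec (Z ω)) P P := by
  classical
  have hYae : AEMeasurable Y P := by
    have h := hspherical 1 (by simp)
    have : (fun ω => (1 : Matrix (Fin k) (Fin k) ℝ).mulVec (Y ω)) = Y := by
      funext ω; simp [Matrix.one_mulVec]
    rw [this] at h
    exact h.aemeasurable_fst
  have hHerm : (Aᵀ * A).IsHermitian := by
    have := Matrix.isHermitian_conjTranspose_mul_self A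
    rwa [Matrix.conjTranspose_eq_transpose_of_trivial] at this
  set O : Matrix (Fin d) (Fin d) ℝ := (hHerm.eigenvectorUnitary : Matrix (Fin d) (Fin d) ℝ)
    with hOdef
  have hOstar : star O = Oᵀ := by
    rw [Matrix.star_eq_conjTranspose, Matrix.conjTranspose_eq_transpose_of_trivial]
  have hO : Oᵀ * O = 1 := by
    rw [← hOstar]
    exact (Matrix.mem_unitaryGroup_iff'.mp hHerm.eigenvectorUnitary.2)
  have hO' : O * Oᵀ = 1 := mul_eq_one_comm.mp hO
  set C : Matrix (Fin d) (Fin k) ℝ := Oᵀ * Aᵀ with hCdef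
  have hCC : C * Cᵀ = Matrix.diagonal (RCLike.ofReal ∘ hHerm.eigenvalues) := by
    have hspec := hHerm.spectral_theorem
    rw [Unitary.conjStarAlgAut_apply] at hspec
    rw [hOstar] at hspec
    rw [← hOdef] at hspec
    calc C * Cᵀ = Oᵀ * (Aᵀ * A) * O := by
          rw [hCdef]
          simp only [Matrix.transpose_mul, Matrix.transpose_transpose, Matrix.mul_assoc]
      _ = Oᵀ * (O * Matrix.diagonal (RCLike.ofReal ∘ hHerm.eigenvalues) * Oᵀ) * O := by
          rw [← hspec]
      _ = (Oᵀ * O) * Matrix.diagonal (RCLike.ofReal ∘ hHerm.eigenvalues) * (Oᵀ * O) := by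
          simp only [Matrix.mul_assoc]
      _ = Matrix.diagonal (RCLike.ofReal ∘ hHerm.eigenvalues) := by
          rw [hO]; simp
  have hdiag : ∀ i j, i ≠ j → (C * Cᵀ) i j = 0 := by
    intro i j hij
    rw [hCC]
    exact Matrix.diagonal_apply_ne _ hij
  have hCmeas : Measurable (fun y : Fin k → ℝ => C.mulVec y) :=
    (LinearMap.continuous_of_finiteDimensional C.mulVecLin).measurable
  refine ⟨O, fun ω => C.mulVec (Y ω), hO, ?_, ?_⟩
  · intro ε hε
    obtain ⟨Q, hQ1, hQ2⟩ := sign_flip_factor C hdiag ε hε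
    have hident := (hspherical Q hQ1).comp hCmeas
    have heq : (fun ω i => ε i * C.mulVec (Y ω) i)
        = fun ω => C.mulVec (Q.mulVec (Y ω)) := by
      funext ω
      have h1 : (Matrix.diagonal ε) *ᵥ (C *ᵥ Y ω) = C *ᵥ (Q *ᵥ Y ω) := by
        rw [Matrix.mulVec_mulVec, Matrix.mulVec_mulVec, hQ2]
      funext i
      rw [← h1, Matrix.mulVec_diagonal]
    rw [heq]
    exact hident
  · have heq : X = fun ω => μ + O.mulVec (C.mulVec (Y ω)) := by
      rw [hX]
      funext ω
      rw [Matrix.mulVec_mulVec, hCdef, ← Matrix.mul_assoc, hO', Matrix.one_mul]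
    rw [← heq]
    apply IdentDistrib.refl
    rw [hX]
    have hcont : Continuous (fun y : Fin k → ℝ => μ + Aᵀ.mulVec y) :=
      continuous_const.add (LinearMap.continuous_of_finiteDimensional Aᵀ.mulVecLin)
    exact hcont.measurable.comp_aemeasurable hYae
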